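/- Let (Z_t)_{t ∈ ℤ} be a stationary 𝒵-valued process with β-mixing coefficients β(k), let a, μ' ≥ 1 be integers, let M > 0, let ℱ be a finite set of measurable functions from 𝒵 to [0, M], and for each ℓ_f ∈ ℱ set L(f) = E[ℓ_f(Z_1)], L̂^spaced(f) = (1/μ') Σ_{k=1}^{μ'} ℓ_f(Z_{1+(k−1)a}), and let σ_f² denote the variance of ℓ_f(Z_1). Then for every family (ε_f)_{f ∈ ℱ} of positive reals: P( ∃ ℓ_f ∈ ℱ : L(f) − L̂^spaced(f) ≥ ε_f ) ≤ Σ_{ℓ_f ∈ ℱ} exp( − μ' ε_f² / (2 σ_f² + (2/3) M ε_f) ) + (μ' − 1) β(a). -/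

import Mathlib

open MeasureTheory ProbabilityTheory
open scoped Nat ENNReal

set_option maxHeartbeats 1000000

/-- Total variation distance between two measures. -/
noncomputable def tvDist {α : Type*} [MeasurableSpace α] (μ ν : Measure α) : ℝ :=
  ⨆ A : {A : Set α // MeasurableSet A}, |(μ A).toReal - (ν A).toReal|

/-- β-mixing coefficient of the process `Z` under `P`: the supremum over `t` of the
total variation distance between the joint law of `((Z s)_{s ≤ t}, (Z s)_{s ≥ t+k})`
and the product of the marginal laws. -/
noncomputable def betaMix {Ω 𝒵 : Type*} [MeasurableSpace Ω] [MeasurableSpace 𝒵]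
    (P : Measure Ω) (Z : ℤ → Ω → 𝒵) (k : ℕ) : ℝ :=
  ⨆ t : ℤ, tvDist
    (P.map (fun ω => (fun s : {s : ℤ // s ≤ t} => Z s ω,
                      fun s : {s : ℤ // t + k ≤ s} => Z s ω)))
    ((P.map (fun ω => fun s : {s : ℤ // s ≤ t} => Z s ω)).prod
      (P.map (fun ω => fun s : {s : ℤ // t + k ≤ s} => Z s ω)))

/-- Stationarity of the process `Z` under `P`. -/
def Stationary {Ω 𝒵 : Type*} [MeasurableSpace Ω] [MeasurableSpace 𝒵]
    (P : Measure Ω) (Z : ℤ → Ω → 𝒵) : Prop :=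
  ∀ s : ℤ, P.map (fun ω => fun t : ℤ => Z (t + s) ω) = P.map (fun ω => fun t : ℤ => Z t ω)

lemma two_mul_three_pow_le_factorial (n : ℕ) : 2 * 3 ^ n ≤ (n + 2)! := by
  induction n with
  | zero => simp [Nat.factorial]
  | succ n ih =>
      have h : (n + 1 + 2)! = (n + 3) * (n + 2)! := by
        rw [show n + 1 + 2 = (n + 2) + 1 from rfl, Nat.factorial_succ]
      calc 2 * 3 ^ (n + 1) = 3 * (2 * 3 ^ n) := by ring
        _ ≤ 3 * (n + 2)! := Nat.mul_le_mul_left 3 ih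
        _ ≤ (n + 3) * (n + 2)! := Nat.mul_le_mul_right _ (by omega)
        _ = (n + 1 + 2)! := h.symm

lemma exp_le_quadratic {x c : ℝ} (hxc : |x| ≤ c) (hc3 : c < 3) :
    Real.exp x ≤ 1 + x + x ^ 2 / (2 * (1 - c / 3)) := by
  have hc0 : 0 ≤ c := le_trans (abs_nonneg x) hxc
  have h1 : 0 < 1 - c / 3 := by linarith
  have hs : Summable (fun n => x ^ n / n !) := Real.summable_pow_div_factorial x
  have hs1 : Summable (fun n => x ^ (n + 1) / (n + 1)!) := by
    exact_mod_cast (summable_nat_add_iff 1).mpr hs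
  have hs2 : Summable (fun n => x ^ (n + 2) / (n + 2)!) := by
    exact_mod_cast (summable_nat_add_iff 2).mpr hs
  have hgeo : Summable (fun n : ℕ => x ^ 2 / 2 * (c / 3) ^ n) :=
    (summable_geometric_of_lt_one (by positivity) (by linarith)).mul_left _
  have hexp : Real.exp x = ∑' n : ℕ, x ^ n / n ! := by
    rw [Real.exp_eq_exp_ℝ, NormedSpace.exp_eq_tsum_div]
  rw [hexp, Summable.tsum_eq_zero_add hs]
  have h2 : ∑' n : ℕ, x ^ (n + 1) / (n + 1)! = x + ∑' n : ℕ, x ^ (n + 2) / (n + 2)! := by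
    rw [Summable.tsum_eq_zero_add hs1]
    norm_num
  have hterm : ∀ n : ℕ, x ^ (n + 2) / (n + 2)! ≤ x ^ 2 / 2 * (c / 3) ^ n := by
    intro n
    have hf : (0:ℝ) < 2 * 3 ^ n := by positivity
    have hfle : (2 * 3 ^ n : ℝ) ≤ (n + 2)! := by
      exact_mod_cast two_mul_three_pow_le_factorial n
    have hnum : x ^ (n + 2) ≤ x ^ 2 * c ^ n := by
      calc x ^ (n + 2) ≤ |x ^ (n + 2)| := le_abs_self _
        _ = |x| ^ 2 * |x| ^ n := by rw [abs_pow]; ring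
        _ ≤ |x| ^ 2 * c ^ n := by
            have := pow_le_pow_left₀ (abs_nonneg x) hxc n
            nlinarith [sq_nonneg x, abs_nonneg x]
        _ = x ^ 2 * c ^ n := by rw [sq_abs]
    calc x ^ (n + 2) / (n + 2)! ≤ (x ^ 2 * c ^ n) / (2 * 3 ^ n) :=
          div_le_div₀ (by positivity) hnum hf hfle
      _ = x ^ 2 / 2 * (c / 3) ^ n := by rw [div_pow]; ring
  have hsum : ∑' n : ℕ, x ^ (n + 2) / (n + 2)! ≤ x ^ 2 / (2 * (1 - c / 3)) := by
    calc ∑' n : ℕ, x ^ (n + 2) / (n + 2)! ≤ ∑' n : ℕ, x ^ 2 / 2 * (c / 3) ^ n :=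
          Summable.tsum_le_tsum hterm hs2 hgeo
      _ = x ^ 2 / 2 * (1 - c / 3)⁻¹ := by
          rw [tsum_mul_left, tsum_geometric_of_lt_one (by positivity) (by linarith)]
      _ = x ^ 2 / (2 * (1 - c / 3)) := by
          field_simp
  simp only [pow_zero, Nat.factorial_zero, Nat.cast_one, div_one] at *
  rw [h2]
  linarith

lemma integral_exp_le {𝒵 : Type*} [MeasurableSpace 𝒵] (ν : Measure 𝒵) [IsProbabilityMeasure ν]
    (g : 𝒵 → ℝ) (hg : Measurable g) (M : ℝ) (hM : 0 < M) (hgM : ∀ z, g z ∈ Set.Icc 0 M)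
    (t : ℝ) (ht : 0 ≤ t) (htM : t * M < 3) :
    ∫ z, Real.exp (t * ((∫ w, g w ∂ν) - g z)) ∂ν
      ≤ Real.exp (t ^ 2 * (∫ z, (g z - ∫ w, g w ∂ν) ^ 2 ∂ν) / (2 * (1 - t * M / 3))) := by
  set m : ℝ := ∫ w, g w ∂ν with hm
  have hgint : Integrable g ν := by
    refine Integrable.mono' (integrable_const M) hg.aestronglyMeasurable ?_
    exact ae_of_all _ fun z => by
      rw [Real.norm_eq_abs, abs_le]; exact ⟨by linarith [(hgM z).1], (hgM z).2⟩
  have hm0 : 0 ≤ m := integral_nonneg fun z => (hgM z).1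
  have hmM : m ≤ M := by
    calc m ≤ ∫ _, M ∂ν := integral_mono hgint (integrable_const M) fun z => (hgM z).2
      _ = M := by simp
  have habs : ∀ z, |t * (m - g z)| ≤ t * M := by
    intro z
    rw [abs_mul, abs_of_nonneg ht]
    have : |m - g z| ≤ M := by
      rw [abs_le]; exact ⟨by linarith [(hgM z).2], by linarith [(hgM z).1]⟩
    exact mul_le_mul_of_nonneg_left this ht
  have hpt : ∀ z, Real.exp (t * (m - g z)) ≤
      1 + t * (m - g z) + (t * (m - g z)) ^ 2 / (2 * (1 - t * M / 3)) :=
    fun z => exp_le_quadratic (habs z) htM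
  have hD : 0 < 1 - t * M / 3 := by linarith
  have hint1 : Integrable (fun z => Real.exp (t * (m - g z))) ν := by
    refine Integrable.mono' (integrable_const (Real.exp (t * M)))
      (Real.measurable_exp.comp (measurable_const.mul (measurable_const.sub hg))).aestronglyMeasurable ?_
    refine ae_of_all _ fun z => ?_
    rw [Real.norm_eq_abs, abs_of_pos (Real.exp_pos _), Real.exp_le_exp]
    calc t * (m - g z) ≤ |t * (m - g z)| := le_abs_self _
      _ ≤ t * M := habs z
  have hintsq : Integrable (fun z => (g z - m) ^ 2) ν := by
    refine Integrable.mono' (integrable_const (M ^ 2))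
      ((hg.sub measurable_const).pow_const 2).aestronglyMeasurable ?_
    refine ae_of_all _ fun z => ?_
    rw [Real.norm_eq_abs, abs_le]
    constructor
    · nlinarith [sq_nonneg (g z - m)]
    · nlinarith [(hgM z).1, (hgM z).2]
  have hint2 : Integrable (fun z =>
      1 + t * (m - g z) + (t * (m - g z)) ^ 2 / (2 * (1 - t * M / 3))) ν := by
    refine (((integrable_const (1:ℝ)).add (((integrable_const m).sub hgint).const_mul t)).add ?_)
    have : (fun z => (t * (m - g z)) ^ 2 / (2 * (1 - t * M / 3)))
        = fun z => (t ^ 2 / (2 * (1 - t * M / 3))) * (g z - m) ^ 2 := by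
      funext z; ring
    rw [this]
    exact hintsq.const_mul _
  calc ∫ z, Real.exp (t * (m - g z)) ∂ν
      ≤ ∫ z, (1 + t * (m - g z) + (t * (m - g z)) ^ 2 / (2 * (1 - t * M / 3))) ∂ν :=
        integral_mono hint1 hint2 hpt
    _ = 1 + t ^ 2 * (∫ z, (g z - m) ^ 2 ∂ν) / (2 * (1 - t * M / 3)) := by
        have he : (fun z => 1 + t * (m - g z) + (t * (m - g z)) ^ 2 / (2 * (1 - t * M / 3)))
            = fun z => (1 + t * (m - g z)) + (t ^ 2 / (2 * (1 - t * M / 3))) * (g z - m) ^ 2 := by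
          funext z; ring
        have h1 : Integrable (fun z => 1 + t * (m - g z)) ν :=
          (integrable_const (1:ℝ)).add (((integrable_const m).sub hgint).const_mul t)
        have h2 : Integrable (fun z => t * (m - g z)) ν :=
          ((integrable_const m).sub hgint).const_mul t
        rw [he, integral_add h1 (hintsq.const_mul _),
          integral_add (integrable_const 1) h2, integral_const_mul, integral_const_mul,
          integral_sub (integrable_const m) hgint]
        simp only [integral_const, probReal_univ, ENNReal.toReal_one, one_smul, smul_eq_mul]
        rw [← hm]
        ring
    _ ≤ Real.exp (t ^ 2 * (∫ z, (g z - m) ^ 2 ∂ν) / (2 * (1 - t * M / 3))) := by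
        have := Real.add_one_le_exp (t ^ 2 * (∫ z, (g z - m) ^ 2 ∂ν) / (2 * (1 - t * M / 3)))
        linarith

lemma bernstein_pi {𝒵 : Type*} [MeasurableSpace 𝒵] (ν : Measure 𝒵) [IsProbabilityMeasure ν]
    (g : 𝒵 → ℝ) (hg : Measurable g) (M : ℝ) (hM : 0 < M) (hgM : ∀ z, g z ∈ Set.Icc 0 M)
    (n : ℕ) (ε : ℝ) (hε : 0 < ε) :
    ((Measure.pi (fun _ : Fin n => ν))
        {v | (n : ℝ) * ε ≤ ∑ k : Fin n, ((∫ w, g w ∂ν) - g (v k))}).toReal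
      ≤ Real.exp (-(n * ε ^ 2)
          / (2 * (∫ z, (g z - ∫ w, g w ∂ν) ^ 2 ∂ν) + 2 / 3 * M * ε)) := by
  classical
  set m : ℝ := ∫ w, g w ∂ν with hm
  set σ2 : ℝ := ∫ z, (g z - m) ^ 2 ∂ν with hσ2
  have hσ2nn : 0 ≤ σ2 := integral_nonneg fun z => sq_nonneg _
  letI : MeasureSpace 𝒵 := ⟨ν⟩
  have hvol : (Measure.pi fun _ : Fin n => ν) = (volume : Measure (Fin n → 𝒵)) := rfl
  haveI : IsProbabilityMeasure (volume : Measure (Fin n → 𝒵)) := by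
    rw [← hvol]; infer_instance
  set X : (Fin n → 𝒵) → ℝ := fun v => ∑ k : Fin n, (m - g (v k)) with hX
  have hXmeas : Measurable X :=
    Finset.measurable_sum _ fun k _ => measurable_const.sub (hg.comp (measurable_pi_apply k))
  have key : ∀ t : ℝ, 0 ≤ t → t * M < 3 →
      ((Measure.pi (fun _ : Fin n => ν)) {v | (n : ℝ) * ε ≤ X v}).toReal
        ≤ Real.exp (-t * ((n : ℝ) * ε) + n * (t ^ 2 * σ2 / (2 * (1 - t * M / 3)))) := by
    intro t ht htM
    have hintexp : Integrable (fun v => Real.exp (t * X v)) (volume : Measure (Fin n → 𝒵)) := by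
      refine Integrable.mono' (integrable_const (Real.exp (t * (n * M))))
        (Real.measurable_exp.comp (measurable_const.mul hXmeas)).aestronglyMeasurable ?_
      refine ae_of_all _ fun v => ?_
      rw [Real.norm_eq_abs, abs_of_pos (Real.exp_pos _), Real.exp_le_exp]
      have hXle : X v ≤ n * M := by
        rw [hX]
        calc ∑ k : Fin n, (m - g (v k)) ≤ ∑ _k : Fin n, M := by
              refine Finset.sum_le_sum fun k _ => ?_
              have h1 := (hgM (v k)).1
              have h2 : m ≤ M := by
                calc m ≤ ∫ _, M ∂ν := by
                      refine integral_mono ?_ (integrable_const M) fun z => (hgM z).2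
                      refine Integrable.mono' (integrable_const M) hg.aestronglyMeasurable ?_
                      exact ae_of_all _ fun z => by
                        rw [Real.norm_eq_abs, abs_le]
                        exact ⟨by linarith [(hgM z).1], (hgM z).2⟩
                  _ = M := by simp
              linarith
          _ = n * M := by simp [Finset.sum_const, mul_comm]
      exact mul_le_mul_of_nonneg_left hXle ht
    have hchern := measure_ge_le_exp_mul_mgf (X := X) (μ := (volume : Measure (Fin n → 𝒵)))
      ((n : ℝ) * ε) ht hintexp
    rw [hvol]
    refine le_trans hchern ?_
    have hmgf : mgf X (volume : Measure (Fin n → 𝒵)) t ≤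
        Real.exp (n * (t ^ 2 * σ2 / (2 * (1 - t * M / 3)))) := by
      have h1 : mgf X (volume : Measure (Fin n → 𝒵)) t
          = ∫ v : Fin n → 𝒵, ∏ k : Fin n, Real.exp (t * (m - g (v k))) := by
        rw [mgf]
        congr 1
        funext v
        simp only [hX, Finset.mul_sum, Real.exp_sum]
      have h2 : ∫ v : Fin n → 𝒵, ∏ k : Fin n, Real.exp (t * (m - g (v k)))
          = (∫ z, Real.exp (t * (m - g z)) ∂ν) ^ n := by
        exact (MeasureTheory.integral_fintype_prod_eq_pow (ι := Fin n) (μ := ν)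
          (f := fun z => Real.exp (t * (m - g z)))).trans (by rw [Fintype.card_fin])
      rw [h1, h2]
      calc (∫ z, Real.exp (t * (m - g z)) ∂ν) ^ n
          ≤ (Real.exp (t ^ 2 * σ2 / (2 * (1 - t * M / 3)))) ^ n := by
            refine pow_le_pow_left₀ (integral_nonneg fun z => (Real.exp_pos _).le) ?_ n
            exact integral_exp_le ν g hg M hM hgM t ht htM
        _ = Real.exp (n * (t ^ 2 * σ2 / (2 * (1 - t * M / 3)))) := by
            rw [← Real.exp_nat_mul]
    calc Real.exp (-t * ((n:ℝ) * ε)) * mgf X (volume : Measure (Fin n → 𝒵)) t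
        ≤ Real.exp (-t * ((n:ℝ) * ε)) * Real.exp (n * (t ^ 2 * σ2 / (2 * (1 - t * M / 3)))) :=
          mul_le_mul_of_nonneg_left hmgf (Real.exp_pos _).le
      _ = Real.exp (-t * ((n:ℝ) * ε) + n * (t ^ 2 * σ2 / (2 * (1 - t * M / 3)))) := by
          rw [← Real.exp_add]
  rcases eq_or_lt_of_le hσ2nn with hσ0 | hσpos
  · have hσ0' : σ2 = 0 := hσ0.symm
    have h1 := key (3 / (2 * M)) (by positivity)
      (by rw [div_mul_eq_mul_div, div_lt_iff₀ (by positivity)]; nlinarith)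
    refine le_trans h1 ?_
    rw [Real.exp_le_exp, hσ0']
    have heq : -(3 / (2 * M)) * ((n:ℝ) * ε)
          + (n:ℝ) * ((3 / (2 * M)) ^ 2 * 0 / (2 * (1 - 3 / (2 * M) * M / 3)))
        = -((n:ℝ) * ε ^ 2) / (2 * 0 + 2 / 3 * M * ε) := by
      field_simp
      ring
    rw [heq]
  · set t : ℝ := 3 * ε / (3 * σ2 + M * ε) with htdef
    have hden : 0 < 3 * σ2 + M * ε := by positivity
    have ht : 0 ≤ t := by positivity
    have htM : t * M < 3 := by
      rw [htdef, div_mul_eq_mul_div, div_lt_iff₀ hden]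
      nlinarith
    have h1 := key t ht htM
    refine le_trans h1 ?_
    rw [Real.exp_le_exp]
    have heq : -t * ((n:ℝ) * ε) + (n:ℝ) * (t ^ 2 * σ2 / (2 * (1 - t * M / 3)))
        = -((n:ℝ) * ε ^ 2) / (2 * σ2 + 2 / 3 * M * ε) := by
      have hfrac : 1 - t * M / 3 = 3 * σ2 / (3 * σ2 + M * ε) := by
        rw [htdef]; field_simp; ring
      rw [hfrac, htdef]
      field_simp
      ring
    rw [heq]

section TV
variable {α : Type*} [MeasurableSpace α]

lemma prob_toReal_le_one (μ : Measure α) [IsProbabilityMeasure μ] (A : Set α) :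
    (μ A).toReal ≤ 1 := by
  have h := prob_le_one (μ := μ) (s := A)
  calc (μ A).toReal ≤ (1 : ℝ≥0∞).toReal :=
        ENNReal.toReal_mono ENNReal.one_ne_top h
    _ = 1 := by simp

lemma abs_sub_toReal_le_one (μ ν : Measure α) [IsProbabilityMeasure μ]
    [IsProbabilityMeasure ν] (A : Set α) :
    |(μ A).toReal - (ν A).toReal| ≤ 1 := by
  rw [abs_sub_le_iff]
  constructor
  · have := prob_toReal_le_one μ A
    have := ENNReal.toReal_nonneg (a := ν A)
    linarith
  · have := prob_toReal_le_one ν A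
    have := ENNReal.toReal_nonneg (a := μ A)
    linarith

lemma abs_le_tvDist (μ ν : Measure α) [IsProbabilityMeasure μ] [IsProbabilityMeasure ν]
    {A : Set α} (hA : MeasurableSet A) :
    |(μ A).toReal - (ν A).toReal| ≤ tvDist μ ν := by
  refine le_ciSup (f := fun A : {A : Set α // MeasurableSet A} =>
    |(μ A).toReal - (ν A).toReal|) ?_ ⟨A, hA⟩
  refine ⟨1, ?_⟩
  rintro x ⟨B, rfl⟩
  exact abs_sub_toReal_le_one μ ν B

lemma tvDist_nonneg (μ ν : Measure α) : 0 ≤ tvDist μ ν :=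
  Real.iSup_nonneg fun _ => abs_nonneg _

lemma tvDist_le_one (μ ν : Measure α) [IsProbabilityMeasure μ] [IsProbabilityMeasure ν] :
    tvDist μ ν ≤ 1 :=
  Real.iSup_le (fun A => abs_sub_toReal_le_one μ ν A) zero_le_one

end TV

section Beta
variable {Ω 𝒵 : Type*} [MeasurableSpace Ω] [MeasurableSpace 𝒵]
  (P : Measure Ω) [IsProbabilityMeasure P] (Z : ℤ → Ω → 𝒵) (hZmeas : ∀ t, Measurable (Z t))

include hZmeas

omit [IsProbabilityMeasure P] hZmeas in
lemma betaMix_nonneg (k : ℕ) : 0 ≤ betaMix P Z k :=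
  Real.iSup_nonneg fun _ => tvDist_nonneg _ _

lemma tvDist_le_betaMix (k : ℕ) (t : ℤ) :
    tvDist
      (P.map (fun ω => (fun s : {s : ℤ // s ≤ t} => Z s ω,
                        fun s : {s : ℤ // t + k ≤ s} => Z s ω)))
      ((P.map (fun ω => fun s : {s : ℤ // s ≤ t} => Z s ω)).prod
        (P.map (fun ω => fun s : {s : ℤ // t + k ≤ s} => Z s ω)))
      ≤ betaMix P Z k := by
  refine le_ciSup (f := fun t : ℤ => tvDist
      (P.map (fun ω => (fun s : {s : ℤ // s ≤ t} => Z s ω,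
                        fun s : {s : ℤ // t + k ≤ s} => Z s ω)))
      ((P.map (fun ω => fun s : {s : ℤ // s ≤ t} => Z s ω)).prod
        (P.map (fun ω => fun s : {s : ℤ // t + k ≤ s} => Z s ω)))) ?_ t
  refine ⟨1, ?_⟩
  rintro x ⟨u, rfl⟩
  have hpast : Measurable (fun ω => fun s : {s : ℤ // s ≤ u} => Z s ω) :=
    measurable_pi_lambda _ fun s => hZmeas s
  have hfut : Measurable (fun ω => fun s : {s : ℤ // u + k ≤ s} => Z s ω) :=
    measurable_pi_lambda _ fun s => hZmeas s
  haveI := Measure.isProbabilityMeasure_map (μ := P) (hpast.prodMk hfut).aemeasurable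
  haveI := Measure.isProbabilityMeasure_map (μ := P) hpast.aemeasurable
  haveI := Measure.isProbabilityMeasure_map (μ := P) hfut.aemeasurable
  exact tvDist_le_one _ _

lemma marginal_eq (hstat : Stationary P Z) (s : ℤ) : P.map (Z s) = P.map (Z 1) := by
  have h := hstat (s - 1)
  have h1 : Measurable (fun ω => fun t : ℤ => Z (t + (s - 1)) ω) :=
    measurable_pi_lambda _ fun t => hZmeas _
  have h2 : Measurable (fun ω => fun t : ℤ => Z t ω) :=
    measurable_pi_lambda _ fun t => hZmeas _
  have hc := congrArg (fun μ : Measure (ℤ → 𝒵) => μ.map (fun v => v 1)) h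
  simp only [Measure.map_map (measurable_pi_apply 1) h1,
    Measure.map_map (measurable_pi_apply 1) h2, Function.comp_def] at hc
  have e1 : (1 : ℤ) + (s - 1) = s := by ring
  rw [e1] at hc
  exact hc
end Beta


section Spaced
variable {Ω 𝒵 : Type*} [MeasurableSpace Ω] [MeasurableSpace 𝒵]

lemma tv_spaced (P : Measure Ω) [IsProbabilityMeasure P] (Z : ℤ → Ω → 𝒵)
    (hZmeas : ∀ t, Measurable (Z t)) (hstat : Stationary P Z) (a : ℕ) :
    ∀ n : ℕ, 1 ≤ n → ∀ s : ℤ, ∀ B : Set (Fin n → 𝒵), MeasurableSet B →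
      ((P.map (fun ω => fun j : Fin n => Z (s + (j : ℕ) * (a : ℕ)) ω)) B).toReal
        ≤ ((Measure.pi fun _ : Fin n => P.map (Z 1)) B).toReal
          + ((n : ℝ) - 1) * betaMix P Z a := by
  haveI : IsProbabilityMeasure (P.map (Z 1)) :=
    Measure.isProbabilityMeasure_map (hZmeas 1).aemeasurable
  intro n hn
  induction n, hn using Nat.le_induction with
  | base =>
      intro s B hB
      have hfn : (fun ω => fun j : Fin 1 => Z (s + (j : ℕ) * (a : ℕ)) ω)
          = fun ω => fun _ : Fin 1 => Z s ω := by
        funext ω j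
        have hj : j = 0 := Subsingleton.elim j 0
        subst hj
        norm_num
      have hconst : Measurable (fun z : 𝒵 => fun _ : Fin 1 => z) :=
        measurable_pi_lambda _ fun _ => measurable_id
      have hmap : P.map (fun ω => fun _ : Fin 1 => Z s ω)
          = (P.map (Z s)).map (fun z => fun _ : Fin 1 => z) := by
        rw [Measure.map_map hconst (hZmeas s)]
        rfl
      have hpi : (Measure.pi fun _ : Fin 1 => P.map (Z 1))
          = (P.map (Z 1)).map (fun z => fun _ : Fin 1 => z) := by
        have hmp := (measurePreserving_funUnique (P.map (Z 1)) (Fin 1)).symm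
          (e := MeasurableEquiv.funUnique (Fin 1) 𝒵)
        have := hmp.map_eq
        exact this.symm.trans rfl
      rw [hfn, hmap, marginal_eq P Z hZmeas hstat s, ← hpi]
      simp
  | succ n hn ih =>
      intro s B hB
      set β := betaMix P Z a with hβ
      have hβnn : 0 ≤ β := betaMix_nonneg P Z a
      have hcnn : 0 ≤ ((n : ℝ) - 1) * β := by
        have : (1:ℝ) ≤ (n:ℝ) := by exact_mod_cast hn
        have h1 : (0:ℝ) ≤ (n:ℝ) - 1 := by linarith
        exact mul_nonneg h1 hβnn
      set μ₁ : Measure 𝒵 := P.map (Z 1) with hμ₁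
      set πn : Measure (Fin n → 𝒵) := Measure.pi fun _ : Fin n => μ₁ with hπn
      -- the equivalence
      set e : (Fin (n+1) → 𝒵) ≃ᵐ 𝒵 × (Fin n → 𝒵) :=
        MeasurableEquiv.piFinSuccAbove (fun _ : Fin (n+1) => 𝒵) 0 with he
      set C : Set (𝒵 × (Fin n → 𝒵)) := ⇑e.symm ⁻¹' B with hCdef
      have hC : MeasurableSet C := e.symm.measurable hB
      have hBC : ⇑e ⁻¹' C = B := by
        ext v
        simp [hCdef]
      -- the maps
      have hvec : Measurable (fun ω => fun j : Fin (n+1) => Z (s + (j : ℕ) * (a : ℕ)) ω) :=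
        measurable_pi_lambda _ fun j => hZmeas _
      have htail : Measurable (fun ω => fun j : Fin n => Z (s + (a : ℕ) + (j : ℕ) * (a : ℕ)) ω) :=
        measurable_pi_lambda _ fun j => hZmeas _
      have hpast : Measurable (fun ω => fun s' : {s' : ℤ // s' ≤ s} => Z s' ω) :=
        measurable_pi_lambda _ fun s' => hZmeas _
      have hfut : Measurable (fun ω => fun s' : {s' : ℤ // s + (a : ℕ) ≤ s'} => Z s' ω) :=
        measurable_pi_lambda _ fun s' => hZmeas _
      have hΦ : Measurable (fun ω => (fun s' : {s' : ℤ // s' ≤ s} => Z s' ω,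
          fun s' : {s' : ℤ // s + (a : ℕ) ≤ s'} => Z s' ω)) := hpast.prodMk hfut
      set ψ₁ : ({s' : ℤ // s' ≤ s} → 𝒵) → 𝒵 := fun x => x ⟨s, le_rfl⟩ with hψ₁def
      set ψ₂ : ({s' : ℤ // s + (a : ℕ) ≤ s'} → 𝒵) → (Fin n → 𝒵) :=
        fun y => fun j : Fin n => y ⟨s + (a : ℕ) + (j : ℕ) * (a : ℕ),
          le_add_of_nonneg_right (by positivity)⟩ with hψ₂def
      have hψ₁ : Measurable ψ₁ := measurable_pi_apply _
      have hψ₂ : Measurable ψ₂ := measurable_pi_lambda _ fun j => measurable_pi_apply _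
      have hψ : Measurable (Prod.map ψ₁ ψ₂) := (hψ₁.comp measurable_fst).prodMk
        (hψ₂.comp measurable_snd)
      -- instances
      haveI hi1 : IsProbabilityMeasure (P.map (fun ω => (fun s' : {s' : ℤ // s' ≤ s} => Z s' ω,
          fun s' : {s' : ℤ // s + (a : ℕ) ≤ s'} => Z s' ω))) :=
        Measure.isProbabilityMeasure_map hΦ.aemeasurable
      haveI hi2 : IsProbabilityMeasure (P.map (fun ω => fun s' : {s' : ℤ // s' ≤ s} => Z s' ω)) :=
        Measure.isProbabilityMeasure_map hpast.aemeasurable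
      haveI hi3 : IsProbabilityMeasure
          (P.map (fun ω => fun s' : {s' : ℤ // s + (a : ℕ) ≤ s'} => Z s' ω)) :=
        Measure.isProbabilityMeasure_map hfut.aemeasurable
      haveI hi4 : IsProbabilityMeasure
          (P.map (fun ω => fun j : Fin n => Z (s + (a : ℕ) + (j : ℕ) * (a : ℕ)) ω)) :=
        Measure.isProbabilityMeasure_map htail.aemeasurable
      -- composition identity
      have hcomp : (fun ω => e ((fun ω' => fun j : Fin (n+1) => Z (s + (j : ℕ) * (a : ℕ)) ω') ω))
          = fun ω => Prod.map ψ₁ ψ₂ ((fun ω' => (fun s' : {s' : ℤ // s' ≤ s} => Z s' ω',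
              fun s' : {s' : ℤ // s + (a : ℕ) ≤ s'} => Z s' ω')) ω) := by
        funext ω
        rw [he]
        refine Prod.ext ?_ ?_
        · simp only [MeasurableEquiv.piFinSuccAbove_apply, Prod.map, hψ₁def]
          norm_num
        · simp only [MeasurableEquiv.piFinSuccAbove_apply, Prod.map, hψ₂def]
          funext j
          show Z (s + ((Fin.succAbove 0 j : Fin (n+1)) : ℕ) * (a : ℕ)) ω = _
          congr 1
          rw [Fin.succAbove_zero, Fin.val_succ]
          push_cast
          ring
      -- step 1: rewrite LHS through the joint law
      have hstep1 : (P.map (fun ω => fun j : Fin (n+1) => Z (s + (j : ℕ) * (a : ℕ)) ω)) B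
          = (P.map (fun ω => (fun s' : {s' : ℤ // s' ≤ s} => Z s' ω,
              fun s' : {s' : ℤ // s + (a : ℕ) ≤ s'} => Z s' ω))) (Prod.map ψ₁ ψ₂ ⁻¹' C) := by
        rw [Measure.map_apply hvec hB, Measure.map_apply hΦ (hψ hC), ← hBC,
          Set.preimage_preimage, hcomp, ← Set.preimage_preimage]
      -- step 2: the product law pushed through ψ
      have hstep2 : ((P.map (fun ω => fun s' : {s' : ℤ // s' ≤ s} => Z s' ω)).prod
            (P.map (fun ω => fun s' : {s' : ℤ // s + (a : ℕ) ≤ s'} => Z s' ω)))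
            (Prod.map ψ₁ ψ₂ ⁻¹' C)
          = (μ₁.prod (P.map (fun ω => fun j : Fin n =>
              Z (s + (a : ℕ) + (j : ℕ) * (a : ℕ)) ω))) C := by
        rw [← Measure.map_apply hψ hC, ← Measure.map_prod_map _ _ hψ₁ hψ₂,
          Measure.map_map hψ₁ hpast, Measure.map_map hψ₂ hfut]
        have e1 : ψ₁ ∘ (fun ω => fun s' : {s' : ℤ // s' ≤ s} => Z s' ω) = Z s := rfl
        have e2 : ψ₂ ∘ (fun ω => fun s' : {s' : ℤ // s + (a : ℕ) ≤ s'} => Z s' ω)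
            = fun ω => fun j : Fin n => Z (s + (a : ℕ) + (j : ℕ) * (a : ℕ)) ω := rfl
        rw [e1, e2, marginal_eq P Z hZmeas hstat s]
      -- step 3: TV bound
      have h1 : ((P.map (fun ω => (fun s' : {s' : ℤ // s' ≤ s} => Z s' ω,
              fun s' : {s' : ℤ // s + (a : ℕ) ≤ s'} => Z s' ω))) (Prod.map ψ₁ ψ₂ ⁻¹' C)).toReal
          ≤ (((P.map (fun ω => fun s' : {s' : ℤ // s' ≤ s} => Z s' ω)).prod
              (P.map (fun ω => fun s' : {s' : ℤ // s + (a : ℕ) ≤ s'} => Z s' ω)))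
              (Prod.map ψ₁ ψ₂ ⁻¹' C)).toReal + β := by
        have habs := abs_le_tvDist
          (P.map (fun ω => (fun s' : {s' : ℤ // s' ≤ s} => Z s' ω,
              fun s' : {s' : ℤ // s + (a : ℕ) ≤ s'} => Z s' ω)))
          ((P.map (fun ω => fun s' : {s' : ℤ // s' ≤ s} => Z s' ω)).prod
            (P.map (fun ω => fun s' : {s' : ℤ // s + (a : ℕ) ≤ s'} => Z s' ω)))
          (hψ hC)
        have hbm := tvDist_le_betaMix P Z hZmeas a s
        have := abs_le.mp (habs.trans hbm)
        linarith [this.2]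
      -- step 4: decoupling via the inductive hypothesis
      have h2 : ((μ₁.prod (P.map (fun ω => fun j : Fin n =>
              Z (s + (a : ℕ) + (j : ℕ) * (a : ℕ)) ω))) C).toReal
          ≤ ((μ₁.prod πn) C).toReal + ((n : ℝ) - 1) * β := by
        set νn : Measure (Fin n → 𝒵) :=
          P.map (fun ω => fun j : Fin n => Z (s + (a : ℕ) + (j : ℕ) * (a : ℕ)) ω) with hνn
        have hslice : ∀ z : 𝒵, νn (Prod.mk z ⁻¹' C)
            ≤ πn (Prod.mk z ⁻¹' C) + ENNReal.ofReal (((n : ℝ) - 1) * β) := by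
          intro z
          have hCz : MeasurableSet (Prod.mk z ⁻¹' C) := measurable_prodMk_left hC
          have hihz := ih (s + (a : ℕ)) (Prod.mk z ⁻¹' C) hCz
          calc νn (Prod.mk z ⁻¹' C) = ENNReal.ofReal ((νn (Prod.mk z ⁻¹' C)).toReal) := by
                rw [ENNReal.ofReal_toReal (measure_ne_top _ _)]
            _ ≤ ENNReal.ofReal ((πn (Prod.mk z ⁻¹' C)).toReal + ((n : ℝ) - 1) * β) := by
                exact ENNReal.ofReal_le_ofReal hihz
            _ = ENNReal.ofReal ((πn (Prod.mk z ⁻¹' C)).toReal)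
                  + ENNReal.ofReal (((n : ℝ) - 1) * β) := by
                rw [ENNReal.ofReal_add ENNReal.toReal_nonneg hcnn]
            _ = πn (Prod.mk z ⁻¹' C) + ENNReal.ofReal (((n : ℝ) - 1) * β) := by
                rw [ENNReal.ofReal_toReal (measure_ne_top _ _)]
        have hEN : (μ₁.prod νn) C ≤ (μ₁.prod πn) C + ENNReal.ofReal (((n : ℝ) - 1) * β) := by
          rw [Measure.prod_apply hC, Measure.prod_apply hC]
          calc ∫⁻ z, νn (Prod.mk z ⁻¹' C) ∂μ₁
              ≤ ∫⁻ z, (πn (Prod.mk z ⁻¹' C) + ENNReal.ofReal (((n : ℝ) - 1) * β)) ∂μ₁ :=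
                lintegral_mono hslice
            _ = (∫⁻ z, πn (Prod.mk z ⁻¹' C) ∂μ₁) + ENNReal.ofReal (((n : ℝ) - 1) * β) := by
                rw [lintegral_add_right _ measurable_const, lintegral_const, measure_univ,
                  mul_one]
        have hne : (μ₁.prod πn) C + ENNReal.ofReal (((n : ℝ) - 1) * β) ≠ ⊤ :=
          ENNReal.add_ne_top.mpr ⟨measure_ne_top _ _, ENNReal.ofReal_ne_top⟩
        calc ((μ₁.prod νn) C).toReal
            ≤ ((μ₁.prod πn) C + ENNReal.ofReal (((n : ℝ) - 1) * β)).toReal :=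
              ENNReal.toReal_mono hne hEN
          _ = ((μ₁.prod πn) C).toReal + ((n : ℝ) - 1) * β := by
              rw [ENNReal.toReal_add (measure_ne_top _ _) ENNReal.ofReal_ne_top,
                ENNReal.toReal_ofReal hcnn]
      -- step 5: identify the product pi measure
      have h3 : (μ₁.prod πn) C = (Measure.pi fun _ : Fin (n+1) => μ₁) B := by
        have hmp := measurePreserving_piFinSuccAbove (fun _ : Fin (n+1) => μ₁) 0
        have hmapeq : (Measure.pi fun _ : Fin (n+1) => μ₁).map e = μ₁.prod πn := hmp.map_eq
        rw [← hmapeq, Measure.map_apply e.measurable hC, hBC]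
      -- combine
      have hfin := hstep1 ▸ h1
      rw [hstep2] at hfin
      have : ((P.map (fun ω => fun j : Fin (n+1) => Z (s + (j : ℕ) * (a : ℕ)) ω)) B).toReal
          ≤ ((Measure.pi fun _ : Fin (n+1) => μ₁) B).toReal + ((n : ℝ) - 1) * β + β := by
        rw [← h3]
        linarith [h2, hfin]
      have hgoal : (((n + 1 : ℕ) : ℝ) - 1) * β = ((n : ℝ) - 1) * β + β := by
        push_cast; ring
      rw [hgoal]
      linarith [this]

end Spaced

/-- Bernstein-type deviation bound on the spaced sample (inequality (17) in the
paper): the probability that some `f ∈ ℱ` has a deviation at least `ε f` between its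
risk `L f = E[f (Z 1)]` and its empirical risk on the spaced sample
`(Z 1, Z (1+a), …, Z (1+(μ'-1)a))` is at most
`∑_{f ∈ ℱ} exp(-μ' (ε f)² / (2σ_f² + (2/3) M ε f)) + (μ'-1)β(a)`,
where `σ_f²` is the variance of `f (Z 1)`. -/
theorem spaced_points_bernstein_bound
    {Ω 𝒵 : Type*} [MeasurableSpace Ω] [MeasurableSpace 𝒵]
    (P : Measure Ω) [IsProbabilityMeasure P]
    (Z : ℤ → Ω → 𝒵) (hZmeas : ∀ t, Measurable (Z t))
    (hstat : Stationary P Z)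
    (a μ' : ℕ) (ha : 1 ≤ a) (hμ' : 1 ≤ μ')
    (M : ℝ) (hM : 0 < M)
    (ℱ : Finset (𝒵 → ℝ))
    (hFmeas : ∀ f ∈ ℱ, Measurable f)
    (hFbdd : ∀ f ∈ ℱ, ∀ z, f z ∈ Set.Icc (0 : ℝ) M)
    (ε : (𝒵 → ℝ) → ℝ) (hε : ∀ f ∈ ℱ, 0 < ε f) :
    (P {ω | ∃ f ∈ ℱ,
        ∫ ω', f (Z 1 ω') ∂P
          - (1 / μ') * ∑ k : Fin μ', f (Z ((1 + (k : ℕ) * a : ℕ) : ℤ) ω)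
          ≥ ε f}).toReal
      ≤ (∑ f ∈ ℱ, Real.exp (-(μ' * ε f ^ 2)
            / (2 * variance (fun ω => f (Z 1 ω)) P + (2 / 3) * M * ε f)))
        + ((μ' : ℝ) - 1) * betaMix P Z a := by
  classical
  haveI : IsProbabilityMeasure (P.map (Z 1)) :=
    Measure.isProbabilityMeasure_map (hZmeas 1).aemeasurable
  have hμpos : (0 : ℝ) < μ' := by exact_mod_cast hμ'
  set μ₁ : Measure 𝒵 := P.map (Z 1) with hμ₁
  set π : Measure (Fin μ' → 𝒵) := Measure.pi fun _ : Fin μ' => μ₁ with hπ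
  set B : (𝒵 → ℝ) → Set (Fin μ' → 𝒵) := fun f =>
    {v | (μ' : ℝ) * ε f ≤ ∑ k : Fin μ', ((∫ w, f w ∂μ₁) - f (v k))} with hBdef
  have hBmeas : ∀ f ∈ ℱ, MeasurableSet (B f) := fun f hf =>
    measurableSet_le measurable_const
      (Finset.measurable_sum _ fun k _ =>
        measurable_const.sub ((hFmeas f hf).comp (measurable_pi_apply k)))
  have hint : ∀ f : 𝒵 → ℝ, Measurable f → ∫ ω', f (Z 1 ω') ∂P = ∫ w, f w ∂μ₁ := fun f hf =>
    (integral_map (hZmeas 1).aemeasurable hf.aestronglyMeasurable).symm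
  set vec : Ω → (Fin μ' → 𝒵) := fun ω => fun j : Fin μ' => Z ((1 : ℤ) + (j : ℕ) * (a : ℕ)) ω
    with hvecdef
  have hvec : Measurable vec := measurable_pi_lambda _ fun j => hZmeas _
  have hZeq : ∀ (k : Fin μ') (ω : Ω),
      Z (((1 + (k : ℕ) * a : ℕ)) : ℤ) ω = vec ω k := fun k ω => by
    have : ((1 + (k : ℕ) * a : ℕ) : ℤ) = (1 : ℤ) + (k : ℕ) * (a : ℕ) := by push_cast; ring
    rw [hvecdef, this]
  have hsetEq : {ω | ∃ f ∈ ℱ,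
        ∫ ω', f (Z 1 ω') ∂P
          - (1 / μ') * ∑ k : Fin μ', f (Z ((1 + (k : ℕ) * a : ℕ) : ℤ) ω)
          ≥ ε f}
      = vec ⁻¹' (⋃ f ∈ ℱ, B f) := by
    ext ω
    simp only [Set.mem_setOf_eq, Set.mem_preimage, Set.mem_iUnion, exists_prop]
    refine exists_congr fun f => and_congr_right fun hf => ?_
    have hS : ∑ k : Fin μ', f (Z ((1 + (k : ℕ) * a : ℕ) : ℤ) ω)
        = ∑ k : Fin μ', f (vec ω k) :=
      Finset.sum_congr rfl fun k _ => by rw [hZeq k ω]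
    rw [ge_iff_le, hS, hint f (hFmeas f hf)]
    show _ ↔ vec ω ∈ B f
    rw [hBdef]
    simp only [Set.mem_setOf_eq]
    have hsum : ∑ k : Fin μ', ((∫ w, f w ∂μ₁) - f (vec ω k))
        = (μ' : ℝ) * (∫ w, f w ∂μ₁) - ∑ k : Fin μ', f (vec ω k) := by
      rw [Finset.sum_sub_distrib, Finset.sum_const, Finset.card_univ, Fintype.card_fin,
        nsmul_eq_mul]
    rw [hsum]
    set m := ∫ w, f w ∂μ₁
    set S := ∑ k : Fin μ', f (vec ω k)
    constructor
    · intro h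
      have h2 := mul_le_mul_of_nonneg_left h hμpos.le
      have e2 : (μ' : ℝ) * (m - (1 / μ') * S) = (μ' : ℝ) * m - S := by
        field_simp
      linarith
    · intro h
      have h2 := mul_le_mul_of_nonneg_left h
        (le_of_lt (by positivity : (0 : ℝ) < 1 / (μ' : ℝ)))
      have e1 : (1 / (μ' : ℝ)) * ((μ' : ℝ) * ε f) = ε f := by field_simp
      have e2 : (1 / (μ' : ℝ)) * ((μ' : ℝ) * m - S) = m - (1 / μ') * S := by
        field_simp
      rw [e1, e2] at h2
      linarith
  have hU : MeasurableSet (⋃ f ∈ ℱ, B f) :=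
    ℱ.measurableSet_biUnion fun f hf => hBmeas f hf
  rw [hsetEq, ← Measure.map_apply hvec hU]
  have htv := tv_spaced P Z hZmeas hstat a μ' hμ' 1 (⋃ f ∈ ℱ, B f) hU
  refine le_trans htv ?_
  have hsum1 : (π (⋃ f ∈ ℱ, B f)).toReal ≤ ∑ f ∈ ℱ, (π (B f)).toReal := by
    have h := measure_biUnion_finset_le (μ := π) ℱ B
    have hne : (∑ f ∈ ℱ, π (B f)) ≠ ⊤ :=
      (ENNReal.sum_lt_top.mpr fun f _ => measure_lt_top _ _).ne
    calc (π (⋃ f ∈ ℱ, B f)).toReal ≤ (∑ f ∈ ℱ, π (B f)).toReal :=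
          ENNReal.toReal_mono hne h
      _ = ∑ f ∈ ℱ, (π (B f)).toReal := ENNReal.toReal_sum fun f _ => measure_ne_top _ _
  have hbern : ∀ f ∈ ℱ, (π (B f)).toReal
      ≤ Real.exp (-(μ' * ε f ^ 2)
          / (2 * variance (fun ω => f (Z 1 ω)) P + (2 / 3) * M * ε f)) := by
    intro f hf
    have hb := bernstein_pi μ₁ f (hFmeas f hf) M hM (hFbdd f hf) μ' (ε f) (hε f hf)
    have hvar : variance (fun ω => f (Z 1 ω)) P
        = ∫ z, (f z - ∫ w, f w ∂μ₁) ^ 2 ∂μ₁ := by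
      have hl2 : MemLp (fun ω => f (Z 1 ω)) 2 P := by
        refine MemLp.of_bound ((hFmeas f hf).comp (hZmeas 1)).aestronglyMeasurable M ?_
        refine ae_of_all _ fun ω => ?_
        rw [Real.norm_eq_abs, abs_le]
        exact ⟨by linarith [(hFbdd f hf (Z 1 ω)).1], (hFbdd f hf (Z 1 ω)).2⟩
      rw [variance_eq_integral hl2.1.aemeasurable]
      rw [hint f (hFmeas f hf)]
      exact (integral_map (hZmeas 1).aemeasurable
        (((hFmeas f hf).sub measurable_const).pow_const 2).aestronglyMeasurable).symm
    rw [hvar]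
    exact hb
  have hsum2 := Finset.sum_le_sum hbern
  linarith
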